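/- In the group H_{2p} = ⟨a,b,c ∣ a², b², c², (ab)³, (ac)², (bc)^{2p}, (bac)^{2p}⟩ for an odd prime p: if (bc)^p = a then ab = 1, and if (bc)^p = aba then ba = 1. -/

import Mathlib

def geoRels (d : ℕ) : Set (FreeGroup (Fin 3)) :=
  {(FreeGroup.of 0)^2, (FreeGroup.of 1)^2, (FreeGroup.of 2)^2,
   (FreeGroup.of 0 * FreeGroup.of 1)^3, (FreeGroup.of 0 * FreeGroup.of 2)^2,
   (FreeGroup.of 1 * FreeGroup.of 2)^d,
   (FreeGroup.of 1 * FreeGroup.of 0 * FreeGroup.of 2)^d}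

abbrev H (d : ℕ) := PresentedGroup (geoRels d)

lemma geoRel_one {d : ℕ} {r : FreeGroup (Fin 3)} (h : r ∈ geoRels d) :
    PresentedGroup.mk (geoRels d) r = 1 :=
  (QuotientGroup.eq_one_iff r).mpr (Subgroup.subset_normalClosure h)

/-- Pure group-theoretic core. -/
lemma key {G : Type*} [Group G] (p : ℕ) (a b c : G)
    (ha : a ^ 2 = 1) (hb : b ^ 2 = 1) (hc : c ^ 2 = 1)
    (hab : (a * b) ^ 3 = 1) (hbc : (b * c) ^ (2 * p) = 1) :
    ((b * c) ^ p = a → a * b = 1) ∧ ((b * c) ^ p = a * b * a → b * a = 1) := by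
  set x : G := (b * c) ^ p with hx
  have hb1 : b * b = 1 := by rw [← sq]; exact hb
  have hbinv : b⁻¹ = b := by rw [← mul_eq_one_iff_inv_eq, hb1]
  have hcinv : c⁻¹ = c := by rw [← mul_eq_one_iff_inv_eq, ← sq, hc]
  have hx2 : x * x = 1 := by rw [hx, ← pow_add, ← two_mul, hbc]
  have hxinv : x⁻¹ = x := by rw [← mul_eq_one_iff_inv_eq, hx2]
  have hconj : b * x * b = x := by
    have h1 : b * x * b = (b * (b * c) * b) ^ p := by
      have := (conj_pow (a := b) (b := b * c) (i := p)).symm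
      rw [hbinv] at this
      rw [hx]; exact this
    have h2 : b * (b * c) * b = c * b := by
      rw [show b * (b * c) * b = (b * b) * (c * b) by group, hb1, one_mul]
    have h3 : (c * b : G) = (b * c)⁻¹ := by rw [mul_inv_rev, hbinv, hcinv]
    rw [h1, h2, h3, inv_pow, ← hx, hxinv]
  have hcomm : x * b = b * x := by
    have h4 := congrArg (fun g => b * g) hconj
    simpa [← mul_assoc, hb1, one_mul] using h4
  constructor
  · intro h
    have h2ab : (a * b) * (a * b) = 1 := by
      rw [← h]
      calc x * b * (x * b) = x * (x * b) * b := by rw [show x*b*(x*b) = x*(b*x)*b by group, ← hcomm]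
        _ = 1 := by rw [show x*(x*b)*b = (x*x)*(b*b) by group, hx2, hb1, mul_one]
    have h5 : ((a * b) * (a * b)) * (a * b) = 1 := by
      rw [← sq, ← pow_succ]; exact hab
    rw [h2ab, one_mul] at h5
    exact h5
  · intro h
    have hbxx : x * b * x = b := by rw [hcomm, mul_assoc, hx2, mul_one]
    rw [h] at hbxx
    have hab3 : ((a * b) * (a * b)) * (a * b) = 1 := by
      rw [← sq, ← pow_succ]; exact hab
    have h6 : (a*b*a) * b * (a*b*a) = (((a*b)*(a*b))*(a*b)) * a := by
      simp [mul_assoc]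
    rw [h6, hab3, one_mul] at hbxx
    rw [← hbxx, ← sq, ha]

theorem H2p_bc_pow_p_cases (p : ℕ) (hp : p.Prime) (hodd : Odd p) :
    (((PresentedGroup.of 1 * PresentedGroup.of 2 : H (2 * p))^p =
        PresentedGroup.of 0) →
      (PresentedGroup.of 0 * PresentedGroup.of 1 : H (2 * p)) = 1) ∧
    (((PresentedGroup.of 1 * PresentedGroup.of 2 : H (2 * p))^p =
        PresentedGroup.of 0 * PresentedGroup.of 1 * PresentedGroup.of 0) →
      (PresentedGroup.of 1 * PresentedGroup.of 0 : H (2 * p)) = 1) := by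
  have ha : (PresentedGroup.of 0 : H (2*p)) ^ 2 = 1 := by
    have := geoRel_one (d := 2*p) (r := (FreeGroup.of 0)^2) (by simp [geoRels])
    simpa [PresentedGroup.of] using this
  have hb : (PresentedGroup.of 1 : H (2*p)) ^ 2 = 1 := by
    have := geoRel_one (d := 2*p) (r := (FreeGroup.of 1)^2) (by simp [geoRels])
    simpa [PresentedGroup.of] using this
  have hab : ((PresentedGroup.of 0 * PresentedGroup.of 1 : H (2*p))) ^ 3 = 1 := by
    have := geoRel_one (d := 2*p) (r := (FreeGroup.of 0 * FreeGroup.of 1)^3) (by simp [geoRels])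
    simpa [PresentedGroup.of] using this
  have hbc : ((PresentedGroup.of 1 * PresentedGroup.of 2 : H (2*p))) ^ (2*p) = 1 := by
    have := geoRel_one (d := 2*p) (r := (FreeGroup.of 1 * FreeGroup.of 2)^(2*p)) (by simp [geoRels])
    simpa [PresentedGroup.of] using this
  have hc : (PresentedGroup.of 2 : H (2*p)) ^ 2 = 1 := by
    have := geoRel_one (d := 2*p) (r := (FreeGroup.of 2)^2) (by simp [geoRels])
    simpa [PresentedGroup.of] using this
  exact key p _ _ _ ha hb hc hab hbc
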